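/- Extension of the graded determinant to nonzero even degrees (Proposition): Assume n ≥ 3, A is nontrivial (1 ≠ 0), all values of w : Fin N → Γ are even, every homogeneous component 𝒜 γ with γ even contains an element invertible in A, and let D : M⁰(w) → 𝒜 0 satisfy the graded-determinant axioms. (a) [Well-definedness] If γ ∈ Γ is even, q and q' are invertible elements of 𝒜 γ, and X₀, X₀' ∈ M⁰(w) satisfy q • X₀ = q' • X₀' (twisted action), then q^N * D(X₀) = q'^N * D(X₀'); hence for every X ∈ M^γ(w) one may set D_γ(X) := q^N * D(X₀) for any invertible q ∈ 𝒜 γ and the unique X₀ ∈ M⁰(w) with X = q • X₀ (namely X₀ = q⁻¹ • X, where q⁻¹ ∈ 𝒜 γ automatically). (b) The extended determinant is multiplicative — i.e. D_{γ+δ}(X * Y) = D_γ(X) * D_δ(Y) for all even γ, δ ∈ Γ, all X ∈ M^γ(w) and all Y ∈ M^δ(w) — if and only if N % 4 = 0 or N % 4 = 1. -/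

import Mathlib

open Matrix

abbrev Gamma (n : ℕ) := Fin n → ZMod 2

def gpair {n : ℕ} (γ δ : Gamma n) : ZMod 2 := ∑ i, γ i * δ i

def gsign {n : ℕ} (γ δ : Gamma n) : ℤ := if gpair γ δ = 1 then -1 else 1

def GammaEven {n : ℕ} (γ : Gamma n) : Prop := gpair γ γ = 0

instance {n : ℕ} : DecidablePred (GammaEven (n := n)) := fun γ =>
  inferInstanceAs (Decidable (gpair γ γ = 0))

/-- `Γ`-graded commutativity of the graded algebra `A`:
`b * a = sign(γ,δ) • (a * b)` for homogeneous `a, b`. -/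
def GradedComm {n : ℕ} {K A : Type*} [Field K] [Ring A] [Algebra K A]
    (𝒜 : Gamma n → Submodule K A) : Prop :=
  ∀ (γ δ : Gamma n) (a b : A), a ∈ 𝒜 γ → b ∈ 𝒜 δ → b * a = gsign γ δ • (a * b)

/-- `X ∈ M^x(w)` : the matrix `X` is homogeneous of degree `x` w.r.t. the weight map `w`. -/
def Mdeg {n : ℕ} {K A : Type*} [Field K] [Ring A] [Algebra K A]
    (𝒜 : Gamma n → Submodule K A) {ι : Type*} (w : ι → Gamma n) (x : Gamma n)
    (X : Matrix ι ι A) : Prop :=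
  ∀ α β, X α β ∈ 𝒜 (w α + w β + x)

/-- `X ∈ M⁰(w)` : the matrix `X` is homogeneous of degree `0` w.r.t. the weight map `w`. -/
def Mdeg0 {n : ℕ} {K A : Type*} [Field K] [Ring A] [Algebra K A]
    (𝒜 : Gamma n → Submodule K A) {ι : Type*} (w : ι → Gamma n)
    (X : Matrix ι ι A) : Prop :=
  ∀ α β, X α β ∈ 𝒜 (w α + w β)

/-- Twisted scalar action of a homogeneous element `a` of degree `γ` on matrices:
`(a • X) α β = sign(γ, w α) • (a * X α β)`. -/
def twist {n : ℕ} {ι : Type*} {A : Type*} [Ring A] (w : ι → Gamma n) (γ : Gamma n) (a : A)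
    (X : Matrix ι ι A) : Matrix ι ι A :=
  Matrix.of fun α β => gsign γ (w α) • (a * X α β)

/-- Leibniz determinant over a (not necessarily commutative) ring, with the product
taken in the order given by the linear order on the index type. -/
def listDet {ι : Type*} [Fintype ι] [LinearOrder ι] {A : Type*} [Ring A]
    (X : Matrix ι ι A) : A :=
  ∑ σ : Equiv.Perm ι, (Equiv.Perm.sign σ : ℤ) •
    ((Finset.sort Finset.univ (· ≤ ·)).map fun i => X (σ i) i).prod

/-- The product over the values `γ` in the range of `v` (ordered by `lo`) of the ordinary
determinants of the diagonal blocks `{α | v α = γ}` of `X`. -/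
def detProd {n : ℕ} (lo : LinearOrder (Gamma n)) {ι : Type*} [Fintype ι] [LinearOrder ι]
    {A : Type*} [Ring A] (v : ι → Gamma n) (X : Matrix ι ι A) : A :=
  letI : LinearOrder (Gamma n) := lo
  ((Finset.sort (Finset.image v Finset.univ) (· ≤ ·)).map fun γ =>
    listDet (Matrix.of fun a b : {α : ι // v α = γ} => X a.1 b.1)).prod

/-- The graded-determinant axioms for a map `D` on degree-zero graded matrices with weight
map `v` and a fixed linear order `lo` on `Γ`: `D` is valued in `𝒜 0`, is multiplicative,
equals the product of the ordinary block determinants on block-diagonal matrices, and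
equals `1` on block-unitriangular matrices. -/
def DetAxioms {n : ℕ} {K A : Type*} [Field K] [Ring A] [Algebra K A]
    (𝒜 : Gamma n → Submodule K A) (lo : LinearOrder (Gamma n))
    {ι : Type*} [Fintype ι] [LinearOrder ι] (v : ι → Gamma n)
    (D : Matrix ι ι A → A) : Prop :=
  (∀ X, Mdeg0 𝒜 v X → D X ∈ 𝒜 0) ∧
  (∀ X Y, Mdeg0 𝒜 v X → Mdeg0 𝒜 v Y → D (X * Y) = D X * D Y) ∧
  (∀ X, Mdeg0 𝒜 v X → (∀ α β, v α ≠ v β → X α β = 0) → D X = detProd lo v X) ∧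
  (∀ X, Mdeg0 𝒜 v X → (∀ α β, v α = v β → X α β = if α = β then (1 : A) else 0) →
    ((∀ α β, lo.lt (v α) (v β) → X α β = 0) ∨ (∀ α β, lo.lt (v β) (v α) → X α β = 0)) →
    D X = 1)

/-! ### Auxiliary lemmas -/

section SignLemmas

lemma gpair_comm {n : ℕ} (γ δ : Gamma n) : gpair γ δ = gpair δ γ := by
  simp [gpair, mul_comm]

lemma gpair_add_right {n : ℕ} (γ δ ε : Gamma n) :
    gpair γ (δ + ε) = gpair γ δ + gpair γ ε := by
  simp [gpair, mul_add, Finset.sum_add_distrib]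

lemma gpair_add_left {n : ℕ} (γ δ ε : Gamma n) :
    gpair (γ + δ) ε = gpair γ ε + gpair δ ε := by
  simp [gpair, add_mul, Finset.sum_add_distrib]

lemma zmod2_sign_add (x y : ZMod 2) :
    (if x + y = 1 then (-1:ℤ) else 1)
      = (if x = 1 then (-1:ℤ) else 1) * (if y = 1 then (-1:ℤ) else 1) := by
  revert x y; decide

lemma gsign_add_right {n : ℕ} (γ δ ε : Gamma n) :
    gsign γ (δ + ε) = gsign γ δ * gsign γ ε := by
  simp only [gsign, gpair_add_right]; exact zmod2_sign_add _ _

lemma gsign_add_left {n : ℕ} (γ δ ε : Gamma n) :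
    gsign (γ + δ) ε = gsign γ ε * gsign δ ε := by
  simp only [gsign, gpair_add_left]; exact zmod2_sign_add _ _

lemma gsign_comm {n : ℕ} (γ δ : Gamma n) : gsign γ δ = gsign δ γ := by
  simp [gsign, gpair_comm]

lemma gsign_mul_self {n : ℕ} (γ δ : Gamma n) : gsign γ δ * gsign γ δ = 1 := by
  unfold gsign; split <;> norm_num

lemma gsign_zero_left {n : ℕ} (δ : Gamma n) : gsign 0 δ = 1 := by
  simp [gsign, gpair]

lemma gamma_add_self {n : ℕ} (γ : Gamma n) : γ + γ = 0 := by
  funext i; exact CharTwo.add_self_eq_zero _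

lemma gsign_smul_cancel {n : ℕ} (γ δ : Gamma n) {A : Type*} [Ring A] {a b : A}
    (h : gsign γ δ • a = gsign γ δ • b) : a = b := by
  have := congrArg (fun x => gsign γ δ • x) h
  simp only [smul_smul, gsign_mul_self, one_smul] at this
  exact this

lemma gpair_single {n : ℕ} (i j : Fin n) :
    gpair (Pi.single i (1 : ZMod 2)) (Pi.single j 1) = if i = j then 1 else 0 := by
  classical
  by_cases h : i = j
  · subst h
    rw [if_pos rfl]
    have hk : ∀ k, Pi.single (M := fun _ : Fin n => ZMod 2) i 1 k
          * Pi.single (M := fun _ : Fin n => ZMod 2) i 1 k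
        = Pi.single (M := fun _ : Fin n => ZMod 2) i 1 k := by
      intro k
      rcases eq_or_ne k i with rfl | hk
      · simp
      · simp [Pi.single_eq_of_ne hk]
    unfold gpair
    simp_rw [hk]
    simp [Finset.sum_pi_single']
  · rw [if_neg h]
    unfold gpair
    apply Finset.sum_eq_zero
    intro k _
    rcases eq_or_ne k i with rfl | hk
    · rw [Pi.single_eq_of_ne h, mul_zero]
    · rw [Pi.single_eq_of_ne hk, zero_mul]

end SignLemmas

section TrianglePow

def triangle : ℕ → ℕ
  | 0 => 0
  | m + 1 => triangle m + m

lemma triangle_parity (m : ℕ) :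
    (m % 4 = 0 ∨ m % 4 = 1 → triangle m % 2 = 0) ∧
    (m % 4 = 2 ∨ m % 4 = 3 → triangle m % 2 = 1) := by
  induction m with
  | zero => simp [triangle]
  | succ m ih =>
    have h : triangle (m + 1) = triangle m + m := rfl
    rw [h]
    omega

variable {A : Type*} [Ring A] (ε : ℤ) (a b : A) (hε : ε * ε = 1)
  (hba : b * a = ε • (a * b))

include hba in
lemma mul_pow_sign : ∀ k : ℕ, b * a ^ k = ε ^ k • (a ^ k * b) := by
  intro k
  induction k with
  | zero => simp
  | succ k ih =>
    rw [pow_succ, ← mul_assoc, ih, smul_mul_assoc, mul_assoc, hba, mul_smul_comm,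
      smul_smul, ← pow_succ, pow_succ, mul_assoc]

include hε hba in
lemma pow_mul_pow_sign : ∀ m : ℕ, (a * b) ^ m = ε ^ (triangle m) • (a ^ m * b ^ m) := by
  have hba' : a * b = ε • (b * a) := by
    rw [hba, smul_smul, hε, one_smul]
  have hsym : ∀ k : ℕ, a * b ^ k = ε ^ k • (b ^ k * a) := mul_pow_sign ε b a hba'
  have hsym' : ∀ k : ℕ, b ^ k * a = ε ^ k • (a * b ^ k) := by
    intro k
    rw [hsym k, smul_smul, ← mul_pow, hε, one_pow, one_smul]
  intro m
  induction m with
  | zero => simp [triangle]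
  | succ m ih =>
    have ht : triangle (m + 1) = triangle m + m := rfl
    rw [pow_succ, ih, smul_mul_assoc, ht, pow_add, mul_smul]
    congr 1
    rw [show a ^ m * b ^ m * (a * b) = a ^ m * (b ^ m * a) * b by noncomm_ring,
      hsym' m, mul_smul_comm, smul_mul_assoc]
    congr 1
    rw [show a ^ m * (a * b ^ m) * b = (a ^ m * a) * (b ^ m * b) by noncomm_ring,
      ← pow_succ, ← pow_succ]

end TrianglePow

section GradedLemmas

variable {n : ℕ} {K A : Type*} [Field K] [Ring A] [Algebra K A]
  (𝒜 : Gamma n → Submodule K A) [GradedAlgebra 𝒜]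

lemma zero_central (hcomm : GradedComm 𝒜) {a : A} (ha : a ∈ 𝒜 0) (b : A) :
    b * a = a * b := by
  induction b using DirectSum.Decomposition.inductionOn 𝒜 with
  | zero => simp
  | homogeneous m =>
    obtain ⟨b, hb⟩ := m
    rw [hcomm 0 _ a b ha hb, gsign_zero_left, one_smul]
  | add b b' hb hb' => rw [add_mul, mul_add, hb, hb']

lemma mem_of_unit_mul {δ ε : Gamma n} {q u : A} (hq : q ∈ 𝒜 δ) (hqu : IsUnit q)
    (h : q * u ∈ 𝒜 (δ + ε)) : u ∈ 𝒜 ε := by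
  have key : ∀ v : A, (DirectSum.decompose 𝒜 (q * v) (δ + ε) : A)
      = q * (DirectSum.decompose 𝒜 v ε : A) := by
    intro v
    induction v using DirectSum.Decomposition.inductionOn 𝒜 with
    | zero => simp
    | homogeneous m =>
      obtain ⟨b, hb⟩ := m
      rename_i μ
      have hqb : q * b ∈ 𝒜 (δ + μ) := SetLike.mul_mem_graded hq hb
      by_cases hμ : μ = ε
      · subst hμ
        rw [DirectSum.decompose_of_mem_same 𝒜 hqb, DirectSum.decompose_of_mem_same 𝒜 hb]
      · rw [DirectSum.decompose_of_mem_ne 𝒜 hqb (fun hcon => hμ (add_left_cancel hcon)),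
          DirectSum.decompose_of_mem_ne 𝒜 hb hμ, mul_zero]
    | add v v' hv hv' =>
      rw [mul_add, DirectSum.decompose_add, DirectSum.add_apply, Submodule.coe_add, hv, hv',
        DirectSum.decompose_add, DirectSum.add_apply, Submodule.coe_add, mul_add]
  have h1 : q * (DirectSum.decompose 𝒜 u ε : A) = q * u := by
    rw [← key u, DirectSum.decompose_of_mem_same 𝒜 h]
  have h2 := hqu.mul_left_cancel h1
  rw [← h2]; exact SetLike.coe_mem _

end GradedLemmas

section MatrixLemmas

/-- the scalar matrix with diagonal entry `u` -/
def diagMat (ι : Type*) [DecidableEq ι] {A : Type*} [Ring A] (u : A) : Matrix ι ι A :=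
  Matrix.of fun α β => if α = β then u else 0

lemma listDet_diagMat {ι : Type*} [Fintype ι] [LinearOrder ι] {A : Type*} [Ring A] (u : A)
    (M : Matrix ι ι A) (hM : ∀ a b, M a b = if a = b then u else 0) :
    listDet M = u ^ Fintype.card ι := by
  rw [listDet, Finset.sum_eq_single (1 : Equiv.Perm ι)]
  · rw [Equiv.Perm.sign_one]
    simp only [Units.val_one, Int.cast_one, one_smul, Equiv.Perm.one_apply]
    rw [List.prod_eq_pow_card _ u, List.length_map, Finset.length_sort, Finset.card_univ]
    intro x hx
    obtain ⟨i, _, rfl⟩ := List.mem_map.1 hx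
    rw [hM, if_pos rfl]
  · intro σ _ hσ
    have : ∃ i, σ i ≠ i := by
      by_contra hcon
      push_neg at hcon
      exact hσ (Equiv.ext hcon)
    obtain ⟨i, hi⟩ := this
    have h0 : (0 : A) ∈ (Finset.sort Finset.univ (· ≤ ·)).map fun j => M (σ j) j := by
      refine List.mem_map.2 ⟨i, ?_, ?_⟩
      · exact (Finset.mem_sort _).2 (Finset.mem_univ i)
      · rw [hM, if_neg hi]
    rw [List.prod_eq_zero h0, smul_zero]
  · intro h
    exact absurd (Finset.mem_univ _) h

lemma list_prod_map_pow {β : Type*} {A : Type*} [Ring A] (u : A) (c : β → ℕ) :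
    ∀ l : List β, (l.map fun γ => u ^ c γ).prod = u ^ (l.map c).sum := by
  intro l
  induction l with
  | nil => simp
  | cons x l ih => simp [ih, pow_add]

lemma detProd_diagMat {n N : ℕ} (lo : LinearOrder (Gamma n)) {A : Type*} [Ring A]
    (w : Fin N → Gamma n) (u : A) :
    detProd lo w (diagMat (Fin N) u) = u ^ N := by
  letI : LinearOrder (Gamma n) := lo
  rw [detProd]
  have hblock : ∀ γ : Gamma n,
      listDet (Matrix.of fun a b : {α : Fin N // w α = γ} => diagMat (Fin N) u a.1 b.1)
        = u ^ Fintype.card {α : Fin N // w α = γ} := by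
    intro γ
    apply listDet_diagMat
    intro a b
    by_cases h : a = b
    · subst h
      rw [if_pos rfl]
      show (if (a : Fin N) = (a : Fin N) then u else 0) = u
      rw [if_pos rfl]
    · rw [if_neg h]
      show (if (a : Fin N) = (b : Fin N) then u else 0) = 0
      rw [if_neg (fun hc => h (Subtype.ext hc))]
  calc ((Finset.sort (Finset.image w Finset.univ) (· ≤ ·)).map fun γ =>
        listDet (Matrix.of fun a b : {α : Fin N // w α = γ} => diagMat (Fin N) u a.1 b.1)).prod
      = ((Finset.sort (Finset.image w Finset.univ) (· ≤ ·)).map fun γ =>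
          u ^ Fintype.card {α : Fin N // w α = γ}).prod := by
        congr 1
        exact List.map_congr_left fun γ _ => hblock γ
    _ = u ^ (((Finset.sort (Finset.image w Finset.univ) (· ≤ ·)).map
          fun γ => Fintype.card {α : Fin N // w α = γ}).sum) := by
        exact list_prod_map_pow u _ _
    _ = u ^ (∑ γ ∈ Finset.image w Finset.univ, Fintype.card {α : Fin N // w α = γ}) := by
        congr 1
        rw [← Finset.sum_map_toList]
        exact List.Perm.sum_eq (List.Perm.map _ (Finset.sort_perm_toList _ _))
    _ = u ^ N := by
        congr 1
        have : ∀ γ : Gamma n, Fintype.card {α : Fin N // w α = γ}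
            = (Finset.univ.filter fun α => w α = γ).card := fun γ => Fintype.card_subtype _
        simp_rw [this]
        rw [← Finset.card_eq_sum_card_fiberwise (fun x _ => Finset.mem_image_of_mem w
          (Finset.mem_univ x)), Finset.card_univ, Fintype.card_fin]

end MatrixLemmas

section Main

variable {n N : ℕ} {K A : Type*} [Field K] [Ring A] [Algebra K A]
  (𝒜 : Gamma n → Submodule K A) [GradedAlgebra 𝒜]
  (w : Fin N → Gamma n)

lemma Mdeg0_one : Mdeg0 𝒜 w (1 : Matrix (Fin N) (Fin N) A) := by
  intro α β
  rw [Matrix.one_apply]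
  by_cases h : α = β
  · subst h
    rw [if_pos rfl, gamma_add_self]
    exact SetLike.one_mem_graded _
  · rw [if_neg h]
    exact Submodule.zero_mem _

lemma Mdeg0_mul {X Y : Matrix (Fin N) (Fin N) A} (hX : Mdeg0 𝒜 w X) (hY : Mdeg0 𝒜 w Y) :
    Mdeg0 𝒜 w (X * Y) := by
  intro α β
  rw [Matrix.mul_apply]
  apply Submodule.sum_mem
  intro k _
  have e : w α + w k + (w k + w β) = w α + w β := by
    rw [show w α + w k + (w k + w β) = w α + (w k + w k) + w β by abel, gamma_add_self,
      add_zero]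
  exact e ▸ SetLike.mul_mem_graded (hX α k) (hY k β)

lemma Mdeg0_diagMat {u : A} (hu : u ∈ 𝒜 0) : Mdeg0 𝒜 w (diagMat (Fin N) u) := by
  intro α β
  show (if α = β then u else 0) ∈ _
  by_cases h : α = β
  · subst h
    rw [if_pos rfl, gamma_add_self]
    exact hu
  · rw [if_neg h]
    exact Submodule.zero_mem _

variable (lo : LinearOrder (Gamma n)) (D : Matrix (Fin N) (Fin N) A → A)

lemma D_one (hD : DetAxioms 𝒜 lo w D) : D 1 = 1 := by
  apply hD.2.2.2 1 (Mdeg0_one 𝒜 w)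
  · intro α β _
    rw [Matrix.one_apply]
  · left
    intro α β h
    rw [Matrix.one_apply, if_neg]
    intro hc
    subst hc
    exact (lo.lt_iff_le_not_ge _ _).1 h |>.2 ((lo.lt_iff_le_not_ge _ _).1 h).1

lemma D_diagMat (hD : DetAxioms 𝒜 lo w D) {u : A} (hu : u ∈ 𝒜 0) :
    D (diagMat (Fin N) u) = u ^ N := by
  rw [hD.2.2.1 _ (Mdeg0_diagMat 𝒜 w hu), detProd_diagMat]
  intro α β h
  show (if α = β then u else 0) = 0
  rw [if_neg (fun hc => h (congrArg w hc))]

lemma diagMat_mul (u : A) (X : Matrix (Fin N) (Fin N) A) :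
    diagMat (Fin N) u * X = Matrix.of fun α β => u * X α β := by
  ext α β
  rw [Matrix.mul_apply]
  show (∑ k, (if α = k then u else 0) * X k β) = u * X α β
  rw [Finset.sum_eq_single α]
  · rw [if_pos rfl]
  · intro k _ hk
    rw [if_neg (fun hc => hk hc.symm), zero_mul]
  · intro h
    exact absurd (Finset.mem_univ _) h

/-- Part (a): well-definedness of the extension. -/
lemma part_a (hcomm : GradedComm 𝒜) (hD : DetAxioms 𝒜 lo w D)
    (γ : Gamma n) (q q' : A) (hq : q ∈ 𝒜 γ) (hqu : IsUnit q) (hq' : q' ∈ 𝒜 γ)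
    (hq'u : IsUnit q') (X₀ X₀' : Matrix (Fin N) (Fin N) A)
    (h0 : Mdeg0 𝒜 w X₀) (h0' : Mdeg0 𝒜 w X₀')
    (heq : twist w γ q X₀ = twist w γ q' X₀') :
    q ^ N * D X₀ = q' ^ N * D X₀' := by
  have hent : ∀ α β, q * X₀ α β = q' * X₀' α β := by
    intro α β
    have h := congr_fun (congr_fun heq α) β
    simp only [twist, Matrix.of_apply] at h
    exact gsign_smul_cancel γ (w α) h
  set u : A := ↑hq'u.unit⁻¹ * q with hu_def
  have hq'u_eq : q' * u = q := hq'u.unit.mul_inv_cancel_left q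
  have hu0 : u ∈ 𝒜 0 := by
    apply mem_of_unit_mul 𝒜 hq' hq'u
    rw [hq'u_eq, add_zero]
    exact hq
  have hX' : X₀' = diagMat (Fin N) u * X₀ := by
    rw [diagMat_mul]
    ext α β
    apply hq'u.mul_left_cancel
    show q' * X₀' α β = q' * (u * X₀ α β)
    rw [← mul_assoc, hq'u_eq, hent]
  have hDX' : D X₀' = u ^ N * D X₀ := by
    rw [hX', hD.2.1 _ _ (Mdeg0_diagMat 𝒜 w hu0) h0, D_diagMat 𝒜 w lo D hD hu0]
  rw [hDX', ← mul_assoc]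
  congr 1
  have hc : Commute q' u := zero_central 𝒜 hcomm hu0 q'
  rw [← Commute.mul_pow hc, hq'u_eq]

/-- product of twisted matrices -/
lemma twist_mul (hcomm : GradedComm 𝒜) (γ δ : Gamma n) (q q' : A) (hq' : q' ∈ 𝒜 δ)
    (X Y : Matrix (Fin N) (Fin N) A) (hX : Mdeg0 𝒜 w X) :
    twist w γ q X * twist w δ q' Y = twist w (γ + δ) (q * q') (X * Y) := by
  ext α β
  show (∑ k, (gsign γ (w α) • (q * X α k)) * (gsign δ (w k) • (q' * Y k β)))
      = gsign (γ + δ) (w α) • (q * q' * (X * Y) α β)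
  rw [Matrix.mul_apply, Finset.mul_sum, Finset.smul_sum]
  apply Finset.sum_congr rfl
  intro k _
  have hc := hcomm (w α + w k) δ (X α k) q' (hX α k) hq'
  rw [smul_mul_assoc, mul_smul_comm, smul_smul,
    show q * q' * (X α k * Y k β) = q * (q' * X α k) * Y k β by noncomm_ring,
    hc, mul_smul_comm, smul_mul_assoc, smul_smul,
    show q * (X α k * q') * Y k β = q * X α k * (q' * Y k β) by noncomm_ring]
  congr 1
  rw [gsign_add_left, gsign_add_left, gsign_comm (w α) δ, gsign_comm (w k) δ]
  have h2 := gsign_mul_self δ (w α)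
  linear_combination (-(gsign γ (w α) * gsign δ (w k))) * h2

end Main

/-- **Extension of the graded determinant to nonzero even degrees** (Proposition).
(a) The value `q ^ N * D(X₀)` does not depend on the factorization `X = q • X₀` of a
homogeneous matrix of even degree `γ` into an invertible `q ∈ 𝒜 γ` and `X₀ ∈ M⁰(w)`.
(b) The resulting extended determinant is multiplicative if and only if
`N % 4 = 0` or `N % 4 = 1`. -/
theorem graded_det_extension {n N : ℕ} (hn : 3 ≤ n) (hN : 1 ≤ N)
    {K A : Type*} [Field K] [CharZero K] [Ring A] [Algebra K A] [Nontrivial A]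
    (𝒜 : Gamma n → Submodule K A) [GradedAlgebra 𝒜] (hcomm : GradedComm 𝒜)
    (w : Fin N → Gamma n) (hw : ∀ α, GammaEven (w α))
    (hinv : ∀ γ : Gamma n, GammaEven γ → ∃ a ∈ 𝒜 γ, IsUnit a)
    (lo : LinearOrder (Gamma n))
    (D : Matrix (Fin N) (Fin N) A → A) (hD : DetAxioms 𝒜 lo w D) :
    -- (a) well-definedness
    (∀ γ : Gamma n, GammaEven γ → ∀ q q' : A, q ∈ 𝒜 γ → IsUnit q → q' ∈ 𝒜 γ → IsUnit q' →
      ∀ X₀ X₀' : Matrix (Fin N) (Fin N) A, Mdeg0 𝒜 w X₀ → Mdeg0 𝒜 w X₀' →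
        twist w γ q X₀ = twist w γ q' X₀' →
        q ^ N * D X₀ = q' ^ N * D X₀') ∧
    -- (b) multiplicativity iff N % 4 = 0 or 1
    ((∀ γ δ : Gamma n, GammaEven γ → GammaEven δ →
      ∀ q q' r : A, q ∈ 𝒜 γ → IsUnit q → q' ∈ 𝒜 δ → IsUnit q' →
        r ∈ 𝒜 (γ + δ) → IsUnit r →
      ∀ X₀ Y₀ Z₀ : Matrix (Fin N) (Fin N) A,
        Mdeg0 𝒜 w X₀ → Mdeg0 𝒜 w Y₀ → Mdeg0 𝒜 w Z₀ →
        twist w γ q X₀ * twist w δ q' Y₀ = twist w (γ + δ) r Z₀ →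
        r ^ N * D Z₀ = (q ^ N * D X₀) * (q' ^ N * D Y₀)) ↔
      (N % 4 = 0 ∨ N % 4 = 1)) := by
  have two_ne : (2 : A) ≠ 0 := by
    have := charZero_of_injective_algebraMap (RingHom.injective (algebraMap K A))
    exact two_ne_zero
  constructor
  · intro γ _ q q' hq hqu hq' hq'u X₀ X₀' h0 h0' heq
    exact part_a 𝒜 w lo D hcomm hD γ q q' hq hqu hq' hq'u X₀ X₀' h0 h0' heq
  constructor
  · -- multiplicativity implies N % 4 = 0 or 1
    intro hmult
    by_contra hN4
    push_neg at hN4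
    have hmod : N % 4 = 2 ∨ N % 4 = 3 := by omega
    have htri : triangle N % 2 = 1 := (triangle_parity N).2 hmod
    have hγδ : ∃ γ δ : Gamma n, GammaEven γ ∧ GammaEven δ ∧ gpair γ δ = 1 := by
      refine ⟨Pi.single ⟨0, by omega⟩ 1 + Pi.single ⟨1, by omega⟩ 1,
          Pi.single ⟨1, by omega⟩ 1 + Pi.single ⟨2, by omega⟩ 1, ?_, ?_, ?_⟩ <;>
        simp [GammaEven, gpair_add_left, gpair_add_right, gpair_single, Fin.ext_iff] <;>
        decide
    obtain ⟨γ, δ, hγ, hδ, hp⟩ := hγδ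
    obtain ⟨q, hq, hqu⟩ := hinv γ hγ
    obtain ⟨q', hq', hq'u⟩ := hinv δ hδ
    have hr : q * q' ∈ 𝒜 (γ + δ) := SetLike.mul_mem_graded hq hq'
    have hru : IsUnit (q * q') := hqu.mul hq'u
    have heq : twist w γ q 1 * twist w δ q' 1 = twist w (γ + δ) (q * q') 1 := by
      rw [twist_mul 𝒜 w hcomm γ δ q q' hq' 1 1 (Mdeg0_one 𝒜 w), Matrix.one_mul]
    have h := hmult γ δ hγ hδ q q' (q * q') hq hqu hq' hq'u hr hru 1 1 1
      (Mdeg0_one 𝒜 w) (Mdeg0_one 𝒜 w) (Mdeg0_one 𝒜 w) heq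
    rw [D_one 𝒜 w lo D hD, mul_one, mul_one, mul_one] at h
    have hanti : q' * q = (-1 : ℤ) • (q * q') := by
      have hc := hcomm γ δ q q' hq hq'
      rwa [show gsign γ δ = -1 by rw [gsign, if_pos hp]] at hc
    have hpow := pow_mul_pow_sign (-1) q q' (by norm_num) hanti N
    have hodd : Odd (triangle N) := Nat.odd_iff.2 htri
    rw [h, hodd.neg_one_pow, neg_one_zsmul] at hpow
    have h2 : (2 : A) * (q ^ N * q' ^ N) = 0 := by
      rw [two_mul]
      nth_rewrite 2 [hpow]
      rw [add_neg_cancel]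
    have hu : IsUnit (q ^ N * q' ^ N) := (hqu.pow N).mul (hq'u.pow N)
    obtain ⟨v, hv⟩ := hu
    have h20 : (2 : A) = 0 := by
      calc (2 : A) = 2 * (q ^ N * q' ^ N) * ↑v⁻¹ := by
            rw [← hv, mul_assoc, Units.mul_inv, mul_one]
        _ = 0 := by rw [h2, zero_mul]
    exact two_ne h20
  · -- N % 4 = 0 or 1 implies multiplicativity
    intro hNmod γ δ hγ hδ q q' r hq hqu hq' hq'u hr hru X₀ Y₀ Z₀ h0X h0Y h0Z heq
    rw [twist_mul 𝒜 w hcomm γ δ q q' hq' X₀ Y₀ h0X] at heq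
    have ha := part_a 𝒜 w lo D hcomm hD (γ + δ) r (q * q') hr hru
      (SetLike.mul_mem_graded hq hq') (hqu.mul hq'u) Z₀ (X₀ * Y₀) h0Z
      (Mdeg0_mul 𝒜 w h0X h0Y) heq.symm
    rw [hD.2.1 X₀ Y₀ h0X h0Y] at ha
    have hqq : (q * q') ^ N = q ^ N * q' ^ N := by
      have hc := hcomm γ δ q q' hq hq'
      by_cases hp : gpair γ δ = 1
      · rw [show gsign γ δ = -1 by rw [gsign, if_pos hp]] at hc
        rw [pow_mul_pow_sign (-1) q q' (by norm_num) hc N]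
        have heven : Even (triangle N) := Nat.even_iff.2 ((triangle_parity N).1 hNmod)
        rw [heven.neg_one_pow, one_smul]
      · rw [show gsign γ δ = 1 by rw [gsign, if_neg hp], one_smul] at hc
        exact Commute.mul_pow hc.symm N
    rw [ha, hqq]
    have hcent := zero_central 𝒜 hcomm (hD.1 X₀ h0X)
    calc q ^ N * q' ^ N * (D X₀ * D Y₀)
        = q ^ N * (q' ^ N * D X₀) * D Y₀ := by noncomm_ring
      _ = q ^ N * (D X₀ * q' ^ N) * D Y₀ := by rw [hcent (q' ^ N)]
      _ = (q ^ N * D X₀) * (q' ^ N * D Y₀) := by noncomm_ring
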